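/- Let K be a differential field and A ∈ Mat_{ℓ×ℓ} K((∂⁻¹)) a matrix pseudodifferential operator all of whose entries have order at most N, such that the matrix A_N ∈ Mat_{ℓ×ℓ} K of coefficients of ∂^N is invertible. Then the Dieudonné determinant of A equals det(A_N) λ^{Nℓ}. -/

import Mathlib

/-- An axiomatization of the ring `R((∂⁻¹))` of pseudodifferential operators over a
commutative differential ring `(R, δ)`: elements are determined by their coefficients
`coeff A : ℤ → R` (supported in a half-line `n ≤ N`), with the product determined by
`∂ⁿ ∘ a = Σ_{j≥0} binom(n,j) δʲ(a) ∂^{n-j}`, equivalently by the symbol formula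
`coeff (A∘B) k = Σ_{m+n-j=k} binom(m,j) aₘ δʲ(bₙ)`. -/
structure PseudoDiffOps (R : Type) [CommRing R] (δ : R → R) : Type 1 where
  carrier : Type
  [ringCarrier : Ring carrier]
  /-- the embedding of `R` as the operators of order `≤ 0` with only a constant term -/
  const : R →+* carrier
  /-- the derivation `∂` as an element of the ring -/
  d : carrier
  /-- the element `∂⁻¹` -/
  dinv : carrier
  δ_add : ∀ a b : R, δ (a + b) = δ a + δ b
  δ_leibniz : ∀ a b : R, δ (a * b) = δ a * b + a * δ b
  /-- `coeff A n` is the coefficient of `∂ⁿ` in `A` -/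
  coeff : carrier → ℤ → R
  coeff_injective : Function.Injective coeff
  coeff_add : ∀ A B n, coeff (A + B) n = coeff A n + coeff B n
  coeff_one : ∀ n, coeff 1 n = if n = 0 then 1 else 0
  coeff_const : ∀ (a : R) (n), coeff (const a) n = if n = 0 then a else 0
  coeff_d : ∀ n, coeff d n = if n = 1 then 1 else 0
  coeff_dinv : ∀ n, coeff dinv n = if n = -1 then 1 else 0
  d_dinv : d * dinv = 1
  dinv_d : dinv * d = 1
  coeff_bddAbove : ∀ A, ∃ N : ℤ, ∀ n, N < n → coeff A n = 0
  exists_of_coeffs : ∀ f : ℤ → R, (∃ N : ℤ, ∀ n, N < n → f n = 0) → ∃ A, coeff A = f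
  coeff_mul : ∀ (A B : carrier) (NA NB k : ℤ),
    (∀ n, NA < n → coeff A n = 0) → (∀ n, NB < n → coeff B n = 0) →
    coeff (A * B) k =
      ∑ m ∈ Finset.Icc (k - NB) NA, ∑ j ∈ Finset.range ((NB - k + m).toNat + 1),
        ((Ring.choose m j : ℤ) : R) * (coeff A m * δ^[j] (coeff B (k + j - m)))

attribute [instance] PseudoDiffOps.ringCarrier

namespace PseudoDiffOps

variable {R : Type} [CommRing R] {δ : R → R} (P : PseudoDiffOps R δ)

/-- the order of a pseudodifferential operator: the largest `n` with `coeff A n ≠ 0`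
(junk value for `A = 0`). -/
noncomputable def ord (A : P.carrier) : ℤ := sSup {n : ℤ | P.coeff A n ≠ 0}

/-- the leading coefficient of a pseudodifferential operator -/
noncomputable def leadCoeff (A : P.carrier) : R := P.coeff A (P.ord A)

/-- `A` is a differential operator, i.e. lies in `R[∂] ⊆ R((∂⁻¹))` -/
def IsDiffOp (A : P.carrier) : Prop := ∀ n : ℤ, n < 0 → P.coeff A n = 0

/-- `A` is monic, i.e. has leading coefficient `1` -/
noncomputable def Monic (A : P.carrier) : Prop := P.leadCoeff A = 1

end PseudoDiffOps

/-- `Det` is a Dieudonné determinant on `ℓ×ℓ` matrices over `K((∂⁻¹))`: writing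
`Det A = (c, d)` for `det A = c λ^d` (with `c = 0` encoding `det A = 0`), it changes
sign under a transposition of two rows, is unchanged when a left multiple of one row is
subtracted from another row, and on an upper triangular matrix with nonzero diagonal
entries of orders `nᵢ` and leading coefficients `aᵢ` it equals `(∏ aᵢ, Σ nᵢ)`, while it
vanishes if some diagonal entry is zero. -/
noncomputable def PseudoDiffOps.IsDieudonneDet {K : Type} [CommRing K] {δ : K → K}
    (P : PseudoDiffOps K δ) (ℓ : ℕ)
    (Det : Matrix (Fin ℓ) (Fin ℓ) P.carrier → K × ℤ) : Prop :=
  (∀ (M : Matrix (Fin ℓ) (Fin ℓ) P.carrier) (i j : Fin ℓ), i ≠ j →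
    Det (M.submatrix (Equiv.swap i j) id) = (-(Det M).1, (Det M).2)) ∧
  (∀ (M : Matrix (Fin ℓ) (Fin ℓ) P.carrier) (i j : Fin ℓ) (Q : P.carrier), i ≠ j →
    Det (M.updateRow j (fun c => M j c - Q * M i c)) = Det M) ∧
  (∀ M : Matrix (Fin ℓ) (Fin ℓ) P.carrier, (∀ i j : Fin ℓ, j < i → M i j = 0) →
    ((∀ i, M i i ≠ 0) →
      Det M = (∏ i, P.leadCoeff (M i i), ∑ i, P.ord (M i i))) ∧
    ((∃ i, M i i = 0) → (Det M).1 = 0))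

namespace PseudoDiffOps

variable {R : Type} [CommRing R] {δ : R → R} (P : PseudoDiffOps R δ)

lemma coeff_zero' (n : ℤ) : P.coeff 0 n = 0 := by
  have := P.coeff_add 0 0 n
  simpa using this.symm

lemma coeff_neg' (A : P.carrier) (n : ℤ) : P.coeff (-A) n = - P.coeff A n := by
  have := P.coeff_add A (-A) n
  rw [add_neg_cancel, P.coeff_zero'] at this
  exact eq_neg_of_add_eq_zero_right this.symm

lemma coeff_sub' (A B : P.carrier) (n : ℤ) :
    P.coeff (A - B) n = P.coeff A n - P.coeff B n := by
  rw [sub_eq_add_neg, P.coeff_add, P.coeff_neg', sub_eq_add_neg]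

lemma eq_zero_of_coeff {A : P.carrier} (h : ∀ n, P.coeff A n = 0) : A = 0 := by
  apply P.coeff_injective
  funext n
  rw [h, P.coeff_zero']

lemma ord_eq {A : P.carrier} {N : ℤ} (hb : ∀ n, N < n → P.coeff A n = 0)
    (hN : P.coeff A N ≠ 0) : P.ord A = N := by
  have hmem : N ∈ {n : ℤ | P.coeff A n ≠ 0} := hN
  have hub : ∀ x ∈ {n : ℤ | P.coeff A n ≠ 0}, x ≤ N := by
    intro x hx
    by_contra hc
    exact hx (hb x (by omega))
  exact le_antisymm (csSup_le ⟨N, hmem⟩ hub) (le_csSup ⟨N, hub⟩ hmem)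

lemma leadCoeff_eq {A : P.carrier} {N : ℤ} (hb : ∀ n, N < n → P.coeff A n = 0)
    (hN : P.coeff A N ≠ 0) : P.leadCoeff A = P.coeff A N := by
  rw [leadCoeff, P.ord_eq hb hN]

lemma coeff_mul_zero_of_lt {A B : P.carrier} {NA NB : ℤ}
    (hA : ∀ n, NA < n → P.coeff A n = 0) (hB : ∀ n, NB < n → P.coeff B n = 0)
    {k : ℤ} (hk : NA + NB < k) : P.coeff (A * B) k = 0 := by
  rw [P.coeff_mul A B NA NB k hA hB]
  rw [Finset.Icc_eq_empty (by omega), Finset.sum_empty]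

lemma coeff_mul_top {A B : P.carrier} {NA NB : ℤ}
    (hA : ∀ n, NA < n → P.coeff A n = 0) (hB : ∀ n, NB < n → P.coeff B n = 0) :
    P.coeff (A * B) (NA + NB) = P.coeff A NA * P.coeff B NB := by
  rw [P.coeff_mul A B NA NB _ hA hB]
  have h1 : NA + NB - NB = NA := by ring
  rw [h1, Finset.Icc_self, Finset.sum_singleton]
  have h2 : (NB - (NA + NB) + NA).toNat = 0 := by omega
  rw [h2, Finset.sum_range_one]
  simp [Ring.choose_zero_right]

end PseudoDiffOps
namespace PseudoDiffOps

/-- Coefficients of a left inverse of an operator of order `N` with coefficients `a`,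
indexed so that `invCoeff δ a N t` is the coefficient of `∂^(-N-t)`. -/
noncomputable def invCoeff {K : Type} [Field K] (δ : K → K) (a : ℤ → K) (N : ℤ) : ℕ → K
  | t =>
    ((if t = 0 then (1:K) else 0) -
      ∑ s ∈ (Finset.range t).attach,
        ∑ j ∈ Finset.range (t - s.1 + 1),
          ((Ring.choose (-N - (s.1 : ℤ)) j : ℤ) : K) *
            (invCoeff δ a N s.1 * δ^[j] (a (N + s.1 + j - t)))) * (a N)⁻¹
  termination_by t => t
  decreasing_by exact Finset.mem_range.mp s.2

variable {K : Type} [Field K] {δ : K → K} (P : PseudoDiffOps K δ)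

lemma exists_left_inv {A : P.carrier} {N : ℤ} (hb : ∀ n, N < n → P.coeff A n = 0)
    (hN : P.coeff A N ≠ 0) :
    ∃ B : P.carrier, B * A = 1 ∧ ∀ n, -N < n → P.coeff B n = 0 := by
  set a := P.coeff A with ha
  obtain ⟨B, hB⟩ := P.exists_of_coeffs
    (fun n => if n ≤ -N then invCoeff δ a N (-N - n).toNat else 0)
    ⟨-N, fun n h => by simp only [if_neg (by omega : ¬ n ≤ -N)]⟩
  have hBb : ∀ n, -N < n → P.coeff B n = 0 := fun n h => by
    rw [hB]; simp only [if_neg (by omega : ¬ n ≤ -N)]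
  refine ⟨B, ?_, hBb⟩
  apply P.coeff_injective
  funext k
  rw [P.coeff_mul B A (-N) N k hBb hb, P.coeff_one]
  by_cases hk : 0 < k
  · rw [Finset.Icc_eq_empty (by omega), Finset.sum_empty, if_neg (by omega)]
  · push_neg at hk
    set t : ℕ := (-k).toNat with ht
    have hkt : k = -(t : ℤ) := by omega
    have step1 :
        ∑ m ∈ Finset.Icc (k - N) (-N), ∑ j ∈ Finset.range ((N - k + m).toNat + 1),
          ((Ring.choose m j : ℤ) : K) * (P.coeff B m * δ^[j] (a (k + j - m))) =
        ∑ s ∈ Finset.range (t + 1), ∑ j ∈ Finset.range (t - s + 1),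
          ((Ring.choose (-N - (s:ℤ)) j : ℤ) : K) *
            (invCoeff δ a N s * δ^[j] (a (N + s + j - t))) := by
      refine Finset.sum_nbij' (fun m => (-N - m).toNat) (fun s => -N - (s:ℤ))
        ?_ ?_ ?_ ?_ ?_
      · intro m hm
        rw [Finset.mem_Icc] at hm
        rw [Finset.mem_range]
        omega
      · intro s hs
        rw [Finset.mem_range] at hs
        rw [Finset.mem_Icc]
        omega
      · intro m hm
        rw [Finset.mem_Icc] at hm
        omega
      · intro s hs
        rw [Finset.mem_range] at hs
        omega
      · intro m hm
        rw [Finset.mem_Icc] at hm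
        obtain ⟨s, rfl⟩ : ∃ s : ℕ, m = -N - (s:ℤ) := ⟨(-N - m).toNat, by omega⟩
        have h1 : ((-N - (-N - (s:ℤ))).toNat) = s := by omega
        rw [h1]
        have h3 : P.coeff B (-N - (s:ℤ)) = invCoeff δ a N s := by
          rw [hB]
          simp only [if_pos (by omega : -N - (s:ℤ) ≤ -N), h1]
        have h2 : (N - k + (-N - (s:ℤ))).toNat = t - s := by omega
        rw [h2, h3]
        refine Finset.sum_congr rfl fun j hj => ?_
        have h4 : k + (j:ℤ) - (-N - (s:ℤ)) = N + s + j - t := by omega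
        rw [h4]
    rw [step1, Finset.sum_range_succ]
    have step2 :
        ∑ j ∈ Finset.range (t - t + 1), ((Ring.choose (-N - (t:ℤ)) j : ℤ) : K) *
          (invCoeff δ a N t * δ^[j] (a (N + t + j - t))) = invCoeff δ a N t * a N := by
      simp only [Nat.sub_self, zero_add, Finset.sum_range_one]
      rw [Ring.choose_zero_right]
      push_cast
      simp only [Function.iterate_zero, id_eq, one_mul]
      congr 2
      omega
    rw [step2]
    have step3 : invCoeff δ a N t * a N =
        (if t = 0 then (1:K) else 0) -
          ∑ s ∈ Finset.range t, ∑ j ∈ Finset.range (t - s + 1),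
            ((Ring.choose (-N - (s:ℤ)) j : ℤ) : K) *
              (invCoeff δ a N s * δ^[j] (a (N + s + j - t))) := by
      rw [invCoeff]
      rw [mul_assoc, inv_mul_cancel₀ (by rw [ha] at hN ⊢; exact hN), mul_one]
      congr 1
      exact Finset.sum_attach (Finset.range t) (fun s => ∑ j ∈ Finset.range (t - s + 1),
        ((Ring.choose (-N - (s:ℤ)) j : ℤ) : K) *
          (invCoeff δ a N s * δ^[j] (a (N + s + j - t))))
    rw [step3]
    have : (t = 0) ↔ (k = 0) := by omega
    simp only [this]
    ring
end PseudoDiffOps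
namespace PseudoDiffOps

lemma pivot_exists {ℓ : ℕ} {K : Type} [Field K] (L : Matrix (Fin ℓ) (Fin ℓ) K)
    (hdet : L.det ≠ 0) (c : Fin ℓ)
    (h3 : ∀ i j : Fin ℓ, j < c → j < i → L i j = 0) :
    ∃ i : Fin ℓ, c ≤ i ∧ L i c ≠ 0 := by
  by_contra hcon
  push_neg at hcon
  have hz : ∀ i j : Fin ℓ, j ≤ c → c ≤ i → L i j = 0 := by
    intro i j hj hi
    rcases lt_or_eq_of_le hj with h | h
    · exact h3 i j h (lt_of_lt_of_le h hi)
    · rw [h]; exact hcon i hi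
  rw [Matrix.det_apply'] at hdet
  obtain ⟨σ, -, hσ⟩ := Finset.exists_ne_zero_of_sum_ne_zero hdet
  have hprod : ∀ j, L (σ j) j ≠ 0 := by
    intro j
    have hne : ∏ i, L (σ i) i ≠ 0 := fun h => hσ (by rw [h, mul_zero])
    exact Finset.prod_ne_zero_iff.mp hne j (Finset.mem_univ j)
  have hmap : ∀ j : Fin ℓ, j ≤ c → σ j < c := by
    intro j hj
    by_contra hcl
    push_neg at hcl
    exact hprod j (hz (σ j) j hj hcl)
  have hcard := Finset.card_le_card_of_injOn (s := Finset.Iic c) (t := Finset.Iio c) σ (fun j hj => by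
      rw [Finset.mem_coe, Finset.mem_Iic] at hj
      rw [Finset.mem_coe, Finset.mem_Iio]
      exact hmap j hj)
    (σ.injective.injOn)
  rw [Fin.card_Iic, Fin.card_Iio] at hcard
  omega

variable {K : Type} [Field K] {δ : K → K} {P : PseudoDiffOps K δ} {ℓ : ℕ}
  {Det : Matrix (Fin ℓ) (Fin ℓ) P.carrier → K × ℤ}

lemma tri_case (hDet : P.IsDieudonneDet ℓ Det) (N : ℤ)
    (M : Matrix (Fin ℓ) (Fin ℓ) P.carrier)
    (h1 : ∀ i j, ∀ n : ℤ, N < n → P.coeff (M i j) n = 0)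
    (h2 : (Matrix.of fun i j => P.coeff (M i j) N).det ≠ 0)
    (h3 : ∀ i j : Fin ℓ, j < i → M i j = 0) :
    Det M = ((Matrix.of fun i j => P.coeff (M i j) N).det, N * ℓ) := by
  set L : Matrix (Fin ℓ) (Fin ℓ) K := Matrix.of fun i j => P.coeff (M i j) N with hL
  have hLt : L.BlockTriangular id := by
    intro i j h
    show P.coeff (M i j) N = 0
    rw [h3 i j h, P.coeff_zero']
  have hdetL : L.det = ∏ i, L i i := Matrix.det_of_upperTriangular hLt
  have hdiag : ∀ i, L i i ≠ 0 := by
    intro i hi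
    exact h2 (by rw [hdetL]; exact Finset.prod_eq_zero (Finset.mem_univ i) hi)
  have hMne : ∀ i, M i i ≠ 0 := by
    intro i h
    exact hdiag i (by show P.coeff (M i i) N = 0; rw [h, P.coeff_zero'])
  rw [(hDet.2.2 M h3).1 hMne]
  have e1 : ∀ i : Fin ℓ, P.leadCoeff (M i i) = L i i :=
    fun i => P.leadCoeff_eq (h1 i i) (hdiag i)
  have e2 : ∀ i : Fin ℓ, P.ord (M i i) = N :=
    fun i => P.ord_eq (h1 i i) (hdiag i)
  rw [Finset.prod_congr rfl (fun i _ => e1 i), Finset.sum_congr rfl (fun i _ => e2 i),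
    ← hdetL, Finset.sum_const, Finset.card_univ, Fintype.card_fin, nsmul_eq_mul,
    mul_comm]

lemma inner_step (hDet : P.IsDieudonneDet ℓ Det) (N : ℤ) (k : ℕ) (c : Fin ℓ)
    (hc : (c : ℕ) = k)
    (next : ∀ M : Matrix (Fin ℓ) (Fin ℓ) P.carrier,
      (∀ i j, ∀ n : ℤ, N < n → P.coeff (M i j) n = 0) →
      (Matrix.of fun i j => P.coeff (M i j) N).det ≠ 0 →
      (∀ i j : Fin ℓ, (j : ℕ) < k + 1 → j < i → M i j = 0) →
      Det M = ((Matrix.of fun i j => P.coeff (M i j) N).det, N * ℓ)) :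
    ∀ m : ℕ, ∀ M : Matrix (Fin ℓ) (Fin ℓ) P.carrier,
      (∀ i j, ∀ n : ℤ, N < n → P.coeff (M i j) n = 0) →
      (Matrix.of fun i j => P.coeff (M i j) N).det ≠ 0 →
      (∀ i j : Fin ℓ, (j : ℕ) < k → j < i → M i j = 0) →
      P.coeff (M c c) N ≠ 0 →
      {i : Fin ℓ | c < i ∧ M i c ≠ 0}.ncard ≤ m →
      Det M = ((Matrix.of fun i j => P.coeff (M i j) N).det, N * ℓ) := by
  intro m
  induction m with
  | zero =>
    intro M h1 h2 h3 _ hcard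
    have hempty : ∀ i : Fin ℓ, c < i → M i c = 0 := by
      intro i hi
      by_contra hne
      have : 0 < ({i : Fin ℓ | c < i ∧ M i c ≠ 0}).ncard :=
        (Set.ncard_pos (Set.toFinite _)).mpr ⟨i, hi, hne⟩
      omega
    refine next M h1 h2 ?_
    intro i j hj hji
    rcases Nat.lt_or_ge (j : ℕ) k with h | h
    · exact h3 i j h hji
    · have hjc : j = c := Fin.ext (by omega)
      rw [hjc]
      refine hempty i ?_
      rw [← hjc]
      exact hji
  | succ m ih =>
    intro M h1 h2 h3 hp hcard
    by_cases hex : ∃ i : Fin ℓ, c < i ∧ M i c ≠ 0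
    · obtain ⟨i, hci, hMic⟩ := hex
      obtain ⟨B, hBA, hBb⟩ := P.exists_left_inv (h1 c c) hp
      set Q : P.carrier := M i c * B with hQ
      have hQb : ∀ n : ℤ, 0 < n → P.coeff Q n = 0 := by
        intro n hn
        exact P.coeff_mul_zero_of_lt (h1 i c) hBb (by omega)
      have hQM : Q * M c c = M i c := by
        rw [hQ, mul_assoc, hBA, mul_one]
      set M' : Matrix (Fin ℓ) (Fin ℓ) P.carrier :=
        M.updateRow i (fun j => M i j - Q * M c j) with hM'
      have hne : c ≠ i := ne_of_lt hci
      have hrow : ∀ j, M' i j = M i j - Q * M c j := fun j => by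
        rw [hM', Matrix.updateRow_self]
      have hother : ∀ i' j, i' ≠ i → M' i' j = M i' j := fun i' j h => by
        rw [hM', Matrix.updateRow_ne h]
      -- order bounds
      have h1' : ∀ i' j, ∀ n : ℤ, N < n → P.coeff (M' i' j) n = 0 := by
        intro i' j n hn
        by_cases h : i' = i
        · subst h
          rw [hrow, P.coeff_sub', h1 i' j n hn,
            P.coeff_mul_zero_of_lt hQb (h1 c j) (by omega), sub_zero]
        · rw [hother i' j h]; exact h1 i' j n hn
      -- leading matrix
      have hlead : (Matrix.of fun i' j => P.coeff (M' i' j) N) =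
          (Matrix.of fun i' j => P.coeff (M i' j) N).updateRow i
            ((fun j => P.coeff (M i j) N) + (- P.coeff Q 0) •
              (fun j => P.coeff (M c j) N)) := by
        apply Matrix.ext
        intro i' j
        by_cases h : i' = i
        · subst h
          rw [Matrix.updateRow_self]
          show P.coeff (M' i' j) N = _
          rw [hrow, P.coeff_sub']
          have : P.coeff (Q * M c j) N = P.coeff Q 0 * P.coeff (M c j) N := by
            have := P.coeff_mul_top (NA := 0) (NB := N) hQb (h1 c j)
            rw [zero_add] at this
            exact this
          rw [this]
          simp only [Pi.add_apply, Pi.smul_apply, smul_eq_mul]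
          ring
        · rw [Matrix.updateRow_ne h]
          show P.coeff (M' i' j) N = P.coeff (M i' j) N
          rw [hother i' j h]
      have hdet' : (Matrix.of fun i' j => P.coeff (M' i' j) N).det =
          (Matrix.of fun i' j => P.coeff (M i' j) N).det := by
        rw [hlead]
        exact Matrix.det_updateRow_add_smul_self _ (Ne.symm hne) _
      have h2' : (Matrix.of fun i' j => P.coeff (M' i' j) N).det ≠ 0 := by
        rw [hdet']; exact h2
      -- triangularity in first k columns
      have h3' : ∀ i' j : Fin ℓ, (j : ℕ) < k → j < i' → M' i' j = 0 := by
        intro i' j hj hji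
        by_cases h : i' = i
        · subst h
          rw [hrow, h3 i' j hj hji, h3 c j hj (by
              rw [Fin.lt_def]; omega), mul_zero, sub_zero]
        · rw [hother i' j h]; exact h3 i' j hj hji
      -- pivot unchanged
      have hp' : P.coeff (M' c c) N ≠ 0 := by
        rw [hother c c hne]; exact hp
      -- the eliminated entry vanishes
      have hic : M' i c = 0 := by
        rw [hrow, hQM, sub_self]
      -- cardinality decreases
      have hcard' : {i' : Fin ℓ | c < i' ∧ M' i' c ≠ 0}.ncard ≤ m := by
        have hsub : {i' : Fin ℓ | c < i' ∧ M' i' c ≠ 0} ⊆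
            {i' : Fin ℓ | c < i' ∧ M i' c ≠ 0} \ {i} := by
          intro i' ⟨hlt, hne'⟩
          by_cases h : i' = i
          · exact absurd (h ▸ hic) (h ▸ hne')
          · exact ⟨⟨hlt, by rw [← hother i' c h]; exact hne'⟩, h⟩
        have hmem : i ∈ {i' : Fin ℓ | c < i' ∧ M i' c ≠ 0} := ⟨hci, hMic⟩
        have := Set.ncard_le_ncard hsub (Set.toFinite _)
        rw [Set.ncard_diff_singleton_of_mem hmem] at this
        omega
      have hres := ih M' h1' h2' h3' hp' hcard'
      have haxiom := hDet.2.1 M c i Q hne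
      rw [show M.updateRow i (fun j => M i j - Q * M c j) = M' from rfl] at haxiom
      rw [← haxiom, hres, hdet']
    · -- no entries to eliminate: done as in base case
      push_neg at hex
      refine next M h1 h2 ?_
      intro i j hj hji
      rcases Nat.lt_or_ge (j : ℕ) k with h | h
      · exact h3 i j h hji
      · have hjc : j = c := Fin.ext (by omega)
        rw [hjc]
        refine hex i ?_
        rw [← hjc]
        exact hji

end PseudoDiffOps
namespace PseudoDiffOps

variable {K : Type} [Field K] {δ : K → K} {P : PseudoDiffOps K δ} {ℓ : ℕ}
  {Det : Matrix (Fin ℓ) (Fin ℓ) P.carrier → K × ℤ}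

lemma outer_step (hDet : P.IsDieudonneDet ℓ Det) (N : ℤ) :
    ∀ d k : ℕ, ℓ ≤ k + d → ∀ M : Matrix (Fin ℓ) (Fin ℓ) P.carrier,
      (∀ i j, ∀ n : ℤ, N < n → P.coeff (M i j) n = 0) →
      (Matrix.of fun i j => P.coeff (M i j) N).det ≠ 0 →
      (∀ i j : Fin ℓ, (j : ℕ) < k → j < i → M i j = 0) →
      Det M = ((Matrix.of fun i j => P.coeff (M i j) N).det, N * ℓ) := by
  intro d
  induction d with
  | zero =>
    intro k hk M h1 h2 h3
    exact tri_case hDet N M h1 h2 fun i j hji => h3 i j (by omega) hji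
  | succ d ihd =>
    intro k hk M h1 h2 h3
    by_cases hkl : ℓ ≤ k
    · exact tri_case hDet N M h1 h2 fun i j hji => h3 i j (by omega) hji
    · push_neg at hkl
      set c : Fin ℓ := ⟨k, hkl⟩ with hcdef
      have hc : (c : ℕ) = k := rfl
      have next : ∀ M' : Matrix (Fin ℓ) (Fin ℓ) P.carrier,
          (∀ i j, ∀ n : ℤ, N < n → P.coeff (M' i j) n = 0) →
          (Matrix.of fun i j => P.coeff (M' i j) N).det ≠ 0 →
          (∀ i j : Fin ℓ, (j : ℕ) < k + 1 → j < i → M' i j = 0) →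
          Det M' = ((Matrix.of fun i j => P.coeff (M' i j) N).det, N * ℓ) :=
        fun M' a b c' => ihd (k + 1) (by omega) M' a b c'
      have h3c : ∀ i j : Fin ℓ, j < c → j < i →
          (Matrix.of fun i j => P.coeff (M i j) N) i j = 0 := by
        intro i j hjc hji
        show P.coeff (M i j) N = 0
        rw [h3 i j (by rw [Fin.lt_def] at hjc; omega) hji, P.coeff_zero']
      obtain ⟨i₀, hci₀, hLic⟩ :=
        pivot_exists (Matrix.of fun i j => P.coeff (M i j) N) h2 c h3c
      by_cases hi0 : i₀ = c
      · exact inner_step hDet N k c hc next _ M h1 h2 h3 (hi0 ▸ hLic) le_rfl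
      · have hcne : c ≠ i₀ := fun h => hi0 h.symm
        have hclt : c < i₀ := lt_of_le_of_ne hci₀ hcne
        set M'' : Matrix (Fin ℓ) (Fin ℓ) P.carrier :=
          M.submatrix (Equiv.swap c i₀) id with hM''
        have happ : ∀ i j, M'' i j = M (Equiv.swap c i₀ i) j := fun i j => rfl
        have h1'' : ∀ i j, ∀ n : ℤ, N < n → P.coeff (M'' i j) n = 0 :=
          fun i j n hn => h1 _ _ n hn
        have hLeq : (Matrix.of fun i j => P.coeff (M'' i j) N) =
            (Matrix.of fun i j => P.coeff (M i j) N).submatrix (Equiv.swap c i₀) id :=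
          rfl
        have hdet'' : (Matrix.of fun i j => P.coeff (M'' i j) N).det =
            -(Matrix.of fun i j => P.coeff (M i j) N).det := by
          rw [hLeq, Matrix.det_permute]
          simp [Equiv.Perm.sign_swap hcne]
        have h2'' : (Matrix.of fun i j => P.coeff (M'' i j) N).det ≠ 0 := by
          rw [hdet'']
          exact neg_ne_zero.mpr h2
        have h3'' : ∀ i j : Fin ℓ, (j : ℕ) < k → j < i → M'' i j = 0 := by
          intro i j hj hji
          rw [happ]
          have hs : Equiv.swap c i₀ i = i ∨ Equiv.swap c i₀ i = c ∨
              Equiv.swap c i₀ i = i₀ := by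
            by_cases e1 : i = c
            · rw [e1, Equiv.swap_apply_left]; tauto
            by_cases e2 : i = i₀
            · rw [e2, Equiv.swap_apply_right]; tauto
            rw [Equiv.swap_apply_of_ne_of_ne e1 e2]; tauto
          have hlt : j < Equiv.swap c i₀ i := by
            rcases hs with h | h | h <;> rw [h]
            · exact hji
            · rw [Fin.lt_def]; omega
            · rw [Fin.lt_def]
              rw [Fin.lt_def] at hclt
              omega
          exact h3 _ j hj hlt
        have hp'' : P.coeff (M'' c c) N ≠ 0 := by
          rw [happ, Equiv.swap_apply_left]
          exact hLic
        have hres := inner_step hDet N k c hc next _ M'' h1'' h2'' h3'' hp'' le_rfl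
        have haxiom := hDet.1 M c i₀ hcne
        rw [← hM''] at haxiom
        rw [hres, hdet''] at haxiom
        obtain ⟨e1, e2⟩ := Prod.mk.injEq .. ▸ haxiom
        refine Prod.ext ?_ ?_
        · have := neg_injective e1
          simp only [this]
        · exact e2.symm

end PseudoDiffOps
/-- if all entries of `A ∈ Mat_{ℓ×ℓ} K((∂⁻¹))` have order at most `N`
and the matrix `A_N` of coefficients of `∂^N` is invertible, then the Dieudonné
determinant of `A` is `det(A_N) λ^{Nℓ}`. -/
theorem dieudonneDet_of_invertible_leading_matrix {K : Type} [Field K] [CharZero K]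
    {δ : K → K} (P : PseudoDiffOps K δ) (ℓ : ℕ)
    (Det : Matrix (Fin ℓ) (Fin ℓ) P.carrier → K × ℤ)
    (hDet : P.IsDieudonneDet ℓ Det)
    (A : Matrix (Fin ℓ) (Fin ℓ) P.carrier) (N : ℤ)
    (hord : ∀ i j, ∀ n : ℤ, N < n → P.coeff (A i j) n = 0)
    (hlead : IsUnit (Matrix.of fun i j => P.coeff (A i j) N)) :
    Det A = ((Matrix.of fun i j => P.coeff (A i j) N).det, N * ℓ) := by
  have h2 : (Matrix.of fun i j => P.coeff (A i j) N).det ≠ 0 :=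
    ((Matrix.isUnit_iff_isUnit_det _).mp hlead).ne_zero
  exact PseudoDiffOps.outer_step hDet N ℓ 0 (by omega) A hord h2
    (fun i j hj _ => absurd hj (Nat.not_lt_zero _))
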